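/- For every n ≥ 1, the quotient ring ℚ[x,y]/(h_{n+1}, h_{n+2}) is a finite-dimensional ℚ-vector space of dimension (n+1)(n+2)/2. -/

import Mathlib

open MvPolynomial

/-- The complete homogeneous symmetric polynomial of degree `k` in two variables,
expressed in the elementary symmetric polynomials `x = X 0`, `y = X 1`. -/
noncomputable def h : ℕ → MvPolynomial (Fin 2) ℚ
  | 0 => 1
  | 1 => X 0
  | (k + 2) => X 0 * h (k + 1) - X 1 * h k

namespace Stmt5Aux

abbrev R2 : Type := MvPolynomial (Fin 2) ℚ

lemma h_rec (k : ℕ) : h (k + 2) = X 0 * h (k + 1) - X 1 * h k := rfl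

noncomputable abbrev I (n : ℕ) : Ideal R2 := Ideal.span {h (n + 1), h (n + 2)}

/-! ### The substitution `x ↦ u + v`, `y ↦ u v` -/

noncomputable def φ : R2 →ₐ[ℚ] R2 := aeval ![X 0 + X 1, X 0 * X 1]

lemma φ_X0 : φ (X 0) = X 0 + X 1 := by simp [φ]
lemma φ_X1 : φ (X 1) = X 0 * X 1 := by simp [φ]

lemma esymm_one2 : esymm (Fin 2) ℚ 1 = X 0 + X 1 := by
  rw [esymm_one, Fin.sum_univ_two]

lemma esymm_two2 : esymm (Fin 2) ℚ 2 = X 0 * X 1 := by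
  rw [esymm]
  rw [show (Finset.powersetCard 2 (Finset.univ : Finset (Fin 2))) = {Finset.univ} by decide]
  simp [Fin.prod_univ_two]

lemma φ_inj : Function.Injective φ := by
  have hinj := esymmAlgHom_injective (σ := Fin 2) (R := ℚ) (n := 2) (by simp)
  intro p q hpq
  apply hinj
  apply Subtype.ext
  rw [esymmAlgHom_apply, esymmAlgHom_apply]
  have e : (fun i : Fin 2 => esymm (Fin 2) ℚ ((i : ℕ) + 1)) = ![X 0 + X 1, X 0 * X 1] := by
    funext i
    fin_cases i
    · simpa using esymm_one2
    · simpa using esymm_two2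
  rw [e]
  exact hpq

lemma phi_h_aux : ∀ k : ℕ,
    (X 0 - X 1) * φ (h k) = X 0 ^ (k + 1) - X 1 ^ (k + 1) ∧
    (X 0 - X 1) * φ (h (k + 1)) = X 0 ^ (k + 2) - X 1 ^ (k + 2) := by
  intro k
  induction k with
  | zero =>
    constructor
    · show (X 0 - X 1) * φ (h 0) = _
      rw [show h 0 = 1 from rfl, map_one]; ring
    · show (X 0 - X 1) * φ (h 1) = _
      rw [show h 1 = X 0 from rfl, φ_X0]; ring
  | succ k ih =>
    refine ⟨ih.2, ?_⟩
    rw [h_rec, map_sub, map_mul, map_mul, φ_X0, φ_X1]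
    linear_combination (X 0 + X 1) * ih.2 - (X 0 * X 1) * ih.1

lemma phi_h (k : ℕ) : (X 0 - X 1) * φ (h k) = X 0 ^ (k + 1) - X 1 ^ (k + 1) :=
  (phi_h_aux k).1

/-! ### Degree bounds -/

lemma degreeOf_one2 (i : Fin 2) : degreeOf i (1 : R2) = 0 := by
  simpa using degreeOf_C (1 : ℚ) i

lemma degreeOf_X_le (i j : Fin 2) : degreeOf i (X j : R2) ≤ 1 := by
  rw [degreeOf_X]
  split <;> omega

lemma degreeOf_X_pow_le (i j : Fin 2) (b : ℕ) :
    degreeOf i ((X j : R2) ^ b) ≤ if i = j then b else 0 := by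
  induction b with
  | zero => simp [degreeOf_one2]
  | succ b ih =>
    rw [pow_succ]
    refine le_trans (degreeOf_mul_le _ _ _) ?_
    have := degreeOf_X (R := ℚ) i j
    split at ih <;> split <;> simp_all

lemma degreeOf_sumX_pow (i : Fin 2) (a : ℕ) :
    degreeOf i ((X 0 + X 1 : R2) ^ a) ≤ a := by
  induction a with
  | zero => simp [degreeOf_one2]
  | succ a ih =>
    rw [pow_succ]
    refine le_trans (degreeOf_mul_le _ _ _) ?_
    have := degreeOf_add_le i (X 0 : R2) (X 1)
    have h0 := degreeOf_X_le i 0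
    have h1 := degreeOf_X_le i 1
    omega

lemma degreeOf_mulX_pow (i : Fin 2) (b : ℕ) :
    degreeOf i ((X 0 * X 1 : R2) ^ b) ≤ b := by
  rw [mul_pow]
  refine le_trans (degreeOf_mul_le _ _ _) ?_
  have h0 := degreeOf_X_pow_le i 0 b
  have h1 := degreeOf_X_pow_le i 1 b
  have : i = 0 ∨ i = 1 := by omega
  rcases this with rfl | rfl <;> simp_all

lemma degreeOf_phi_mon (i : Fin 2) (a b : ℕ) :
    degreeOf i (φ (X 0 ^ a * X 1 ^ b)) ≤ a + b := by
  rw [map_mul, map_pow, map_pow, φ_X0, φ_X1]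
  refine le_trans (degreeOf_mul_le _ _ _) ?_
  have := degreeOf_sumX_pow i a
  have := degreeOf_mulX_pow i b
  omega

lemma degreeOf_smul_le' (i : Fin 2) (c : ℚ) (f : R2) :
    degreeOf i (c • f) ≤ degreeOf i f := by
  rw [smul_eq_C_mul]
  refine le_trans (degreeOf_mul_le _ _ _) ?_
  rw [degreeOf_C]
  omega

/-! ### Coefficient lemmas -/

lemma coeff_Xpow_mul (i : Fin 2) (k : ℕ) (f : R2) (m : Fin 2 →₀ ℕ) (hm : m i < k) :
    coeff m (X i ^ k * f) = 0 := by
  rw [X_pow_eq_monomial, coeff_monomial_mul', if_neg]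
  intro hle
  have := hle i
  simp [Finsupp.single_apply] at this
  omega

lemma coeff_zero_of_degreeOf_lt (f : R2) (i : Fin 2) (m : Fin 2 →₀ ℕ)
    (hd : degreeOf i f < m i) : coeff m f = 0 := by
  by_contra hc
  have hm : m ∈ f.support := mem_support_iff.2 hc
  have := (degreeOf_le_iff (n := i) (f := f) (d := degreeOf i f)).1 le_rfl m hm
  omega

/-! ### The key lemma: small elements of the ideal vanish -/

lemma key (n : ℕ) (p : R2) (hmem : p ∈ I n)
    (hdeg : ∀ i : Fin 2, degreeOf i (φ p) ≤ n) : p = 0 := by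
  obtain ⟨A, B, hp⟩ := Ideal.mem_span_pair.1 hmem
  apply φ_inj
  rw [map_zero]
  have hq : (X 0 - X 1) * φ p =
      X 0 ^ (n + 2) * (φ A + X 0 * φ B) - X 1 ^ (n + 2) * (φ A + X 1 * φ B) := by
    rw [← hp, map_add, map_mul, map_mul]
    linear_combination (φ A) * phi_h (n + 1) + (φ B) * phi_h (n + 2)
  have hd : ∀ i : Fin 2, degreeOf i ((X 0 - X 1) * φ p) ≤ n + 1 := by
    intro i
    refine le_trans (degreeOf_mul_le _ _ _) ?_
    have hs : degreeOf i (X 0 - X 1 : R2) ≤ 1 := by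
      refine le_trans (degreeOf_sub_le _ _ _) ?_
      have h0 := degreeOf_X_le i 0
      have h1 := degreeOf_X_le i 1
      omega
    have := hdeg i
    omega
  have hq0 : (X 0 - X 1) * φ p = 0 := by
    apply MvPolynomial.ext
    intro m
    rw [coeff_zero]
    by_cases h0 : n + 1 < m 0
    · exact coeff_zero_of_degreeOf_lt _ _ _ (lt_of_le_of_lt (hd 0) h0)
    by_cases h1 : n + 1 < m 1
    · exact coeff_zero_of_degreeOf_lt _ _ _ (lt_of_le_of_lt (hd 1) h1)
    rw [hq, coeff_sub, coeff_Xpow_mul _ _ _ _ (by omega),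
      coeff_Xpow_mul _ _ _ _ (by omega), sub_zero]
  rcases mul_eq_zero.1 hq0 with hc | hc
  · exfalso
    rw [sub_eq_zero] at hc
    exact (by omega : (0 : Fin 2) ≠ 1) (X_injective hc)
  · exact hc

/-! ### Ideal membership: `y^j · h i ∈ I` whenever `i + j = n + 1` -/

lemma mem_I (n : ℕ) : ∀ j i : ℕ, i + j = n + 1 →
    X 1 ^ j * h i ∈ I n ∧ X 1 ^ j * h (i + 1) ∈ I n := by
  intro j
  induction j with
  | zero =>
    intro i hi
    have : i = n + 1 := by omega
    subst this
    constructor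
    · simpa using Ideal.subset_span (by simp)
    · simpa using Ideal.subset_span (by simp)
  | succ j ihj =>
    intro i hi
    have hIH := ihj (i + 1) (by omega)
    constructor
    · have e : X 1 ^ (j + 1) * h i =
          X 0 * (X 1 ^ j * h (i + 1)) - X 1 ^ j * h (i + 2) := by
        rw [h_rec i]; ring
      rw [e]
      exact sub_mem (Ideal.mul_mem_left _ _ hIH.1) hIH.2
    · have e : X 1 ^ (j + 1) * h (i + 1) = X 1 * (X 1 ^ j * h (i + 1)) := by ring
      rw [e]
      exact Ideal.mul_mem_left _ _ hIH.1

/-! ### Total degree bounds for `h` -/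

lemma monomial_eq_smul (m : Fin 2 →₀ ℕ) (c : ℚ) :
    (monomial m c : R2) = c • (X 0 ^ (m 0) * X 1 ^ (m 1)) := by
  rw [monomial_eq, smul_eq_C_mul]
  congr 1
  rw [Finsupp.prod_fintype _ _ (fun i => pow_zero _), Fin.prod_univ_two]

lemma deg_le_of_mem_support (p : R2) (m : Fin 2 →₀ ℕ) (hm : m ∈ p.support) :
    m 0 + m 1 ≤ p.totalDegree := by
  rw [show m 0 + m 1 = (m.sum fun _ e => e) by
    rw [Finsupp.sum_fintype _ _ (fun i => rfl), Fin.sum_univ_two]]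
  exact Finset.le_sup (f := fun m => m.sum fun _ e => e) hm

lemma tdX_mul_le' (i : Fin 2) (p : R2) (d : ℕ) (hp : p.totalDegree ≤ d) :
    (X i * p).totalDegree ≤ d + 1 := by
  refine le_trans (totalDegree_mul _ _) ?_
  have := totalDegree_X (R := ℚ) i
  omega

lemma td_h' : ∀ k : ℕ, (h k).totalDegree ≤ k ∧ (h (k + 1)).totalDegree ≤ k + 1 := by
  intro k
  induction k with
  | zero =>
    refine ⟨by simp [show h 0 = 1 from rfl], ?_⟩
    simp [show h 1 = X 0 from rfl, totalDegree_X]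
  | succ k ih =>
    refine ⟨ih.2, ?_⟩
    rw [h_rec]
    refine le_trans (totalDegree_sub _ _) (max_le ?_ ?_)
    · exact le_trans (tdX_mul_le' _ _ _ ih.2) (by omega)
    · exact le_trans (tdX_mul_le' _ _ _ ih.1) (by omega)

lemma td_hd : ∀ k : ℕ, (h (k + 1) - X 0 ^ (k + 1)).totalDegree ≤ k ∧
    (h (k + 2) - X 0 ^ (k + 2)).totalDegree ≤ k + 1 := by
  intro k
  induction k with
  | zero =>
    constructor
    · simp [show h 1 = X 0 from rfl]
    · have e : h 2 - X 0 ^ 2 = -(X 1 * 1) := by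
        rw [h_rec 0, show h 1 = X 0 from rfl, show h 0 = 1 from rfl]; ring
      rw [e, totalDegree_neg]
      exact le_trans (tdX_mul_le' _ _ 0 (by simp)) le_rfl
  | succ k ih =>
    refine ⟨ih.2, ?_⟩
    have e : h (k + 3) - X 0 ^ (k + 3)
        = X 0 * (h (k + 2) - X 0 ^ (k + 2)) - X 1 * h (k + 1) := by
      rw [h_rec (k + 1)]; ring
    rw [e]
    refine le_trans (totalDegree_sub _ _) (max_le ?_ ?_)
    · refine le_trans (totalDegree_mul _ _) ?_
      have h1 := totalDegree_X (R := ℚ) (0 : Fin 2)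
      have h2 := ih.2
      omega
    · exact le_trans (tdX_mul_le' _ _ _ (td_h' k).2) (by omega)

/-! ### Spanning -/

noncomputable abbrev mkI (n : ℕ) : R2 →ₐ[ℚ] R2 ⧸ I n := Ideal.Quotient.mkₐ ℚ (I n)

noncomputable abbrev S (n : ℕ) : Submodule ℚ (R2 ⧸ I n) :=
  Submodule.span ℚ {z | ∃ a b : ℕ, a + b ≤ n ∧ z = mkI n (X 0 ^ a * X 1 ^ b)}

lemma reduce (n : ℕ) : ∀ d : ℕ, ∀ p : R2, p.totalDegree ≤ d → mkI n p ∈ S n := by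
  intro d
  induction d using Nat.strong_induction_on with
  | _ d ih =>
    intro p hp
    rw [p.as_sum, map_sum]
    refine Submodule.sum_mem _ ?_
    intro m hm
    have hdm : m 0 + m 1 ≤ d := le_trans (deg_le_of_mem_support p m hm) hp
    rw [monomial_eq_smul, map_smul]
    refine Submodule.smul_mem _ _ ?_
    set a := m 0; set b := m 1
    by_cases hab : a + b ≤ n
    · exact Submodule.subset_span ⟨a, b, hab, rfl⟩
    push_neg at hab
    by_cases hb : n + 1 ≤ b
    · have hy : (X 1 : R2) ^ (n + 1) ∈ I n := by
        have := (mem_I n (n + 1) 0 (by omega)).1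
        simpa [show h 0 = 1 from rfl] using this
      have hin : (X 0 : R2) ^ a * X 1 ^ b ∈ I n := by
        have e : (X 0 : R2) ^ a * X 1 ^ b
            = (X 0 ^ a * X 1 ^ (b - (n + 1))) * X 1 ^ (n + 1) := by
          rw [mul_assoc, ← pow_add]
          congr 2
          omega
        rw [e]
        exact Ideal.mul_mem_left _ _ hy
      rw [show mkI n (X 0 ^ a * X 1 ^ b) = 0 from (Ideal.Quotient.eq_zero_iff_mem).2 hin]
      exact Submodule.zero_mem _
    · push_neg at hb
      obtain ⟨i, hib⟩ : ∃ i, i + b = n + 1 := ⟨n + 1 - b, by omega⟩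
      have hi1 : 1 ≤ i := by omega
      have hai : i ≤ a := by omega
      have hImem : X 1 ^ b * h i ∈ I n := (mem_I n b i hib).1
      have e : (X 0 : R2) ^ a * X 1 ^ b =
          X 0 ^ (a - i) * (X 1 ^ b * h i)
            - X 0 ^ (a - i) * X 1 ^ b * (h i - X 0 ^ i) := by
        have e2 : (X 0 : R2) ^ a = X 0 ^ (a - i) * X 0 ^ i := by
          rw [← pow_add]; congr 1; omega
        rw [e2]; ring
      rw [e, map_sub]
      have h1 : mkI n (X 0 ^ (a - i) * (X 1 ^ b * h i)) = 0 :=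
        (Ideal.Quotient.eq_zero_iff_mem).2 (Ideal.mul_mem_left _ _ hImem)
      rw [h1, zero_sub]
      refine Submodule.neg_mem _ ?_
      have htd : (X 0 ^ (a - i) * X 1 ^ b * (h i - X 0 ^ i)).totalDegree ≤ d - 1 := by
        refine le_trans (totalDegree_mul _ _) ?_
        have hXa : ((X 0 : R2) ^ (a - i) * X 1 ^ b).totalDegree ≤ (a - i) + b := by
          refine le_trans (totalDegree_mul _ _) ?_
          have := totalDegree_X_pow (R := ℚ) (0 : Fin 2) (a - i)
          have := totalDegree_X_pow (R := ℚ) (1 : Fin 2) b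
          omega
        have hhd : (h i - X 0 ^ i).totalDegree ≤ i - 1 := by
          obtain ⟨i', rfl⟩ : ∃ i', i = i' + 1 := ⟨i - 1, by omega⟩
          simpa using (td_hd i').1
        omega
      exact ih (d - 1) (by omega) _ htd

lemma span_top (n : ℕ) : S n = ⊤ := by
  rw [eq_top_iff]
  intro z _
  obtain ⟨p, rfl⟩ := Ideal.Quotient.mkₐ_surjective ℚ (I n) z
  exact reduce n p.totalDegree p le_rfl

/-! ### The basis index set -/

noncomputable def idx (n : ℕ) : Finset ((_ : ℕ) × ℕ) :=
  (Finset.range (n + 1)).sigma fun a => Finset.range (n + 1 - a)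

lemma mem_idx {n : ℕ} {i : (_ : ℕ) × ℕ} : i ∈ idx n ↔ i.1 + i.2 ≤ n := by
  simp only [idx, Finset.mem_sigma, Finset.mem_range]
  omega

lemma card_idx (n : ℕ) : (idx n).card * 2 = (n + 1) * (n + 2) := by
  rw [idx, Finset.card_sigma]
  simp only [Finset.card_range]
  have e : ∑ a ∈ Finset.range (n + 1), (n + 1 - a)
      = ∑ a ∈ Finset.range (n + 1), (a + 1) := by
    rw [← Finset.sum_range_reflect]
    refine Finset.sum_congr rfl ?_
    intro a ha
    rw [Finset.mem_range] at ha
    omega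
  rw [e, Finset.sum_add_distrib, Finset.sum_const, Finset.card_range, smul_eq_mul, mul_one]
  have hs := Finset.sum_range_id_mul_two (n + 1)
  calc (∑ a ∈ Finset.range (n + 1), a + (n + 1)) * 2
      = (∑ a ∈ Finset.range (n + 1), a) * 2 + (n + 1) * 2 := by ring
    _ = (n + 1) * ((n + 1) - 1) + (n + 1) * 2 := by rw [hs]
    _ = (n + 1) * n + (n + 1) * 2 := by simp
    _ = (n + 1) * (n + 2) := by ring

noncomputable def bas (n : ℕ) : ↥(idx n) → R2 ⧸ I n :=
  fun i => mkI n (X 0 ^ (i : (_ : ℕ) × ℕ).1 * X 1 ^ (i : (_ : ℕ) × ℕ).2)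

lemma bas_span (n : ℕ) : ⊤ ≤ Submodule.span ℚ (Set.range (bas n)) := by
  rw [← span_top n]
  refine Submodule.span_le.2 ?_
  rintro z ⟨a, b, hab, rfl⟩
  exact Submodule.subset_span ⟨⟨⟨a, b⟩, mem_idx.2 hab⟩, rfl⟩

lemma single_add_single_inj {a b a' b' : ℕ}
    (e : Finsupp.single (0 : Fin 2) a + Finsupp.single 1 b
       = Finsupp.single (0 : Fin 2) a' + Finsupp.single 1 b') : a = a' ∧ b = b' := by
  constructor
  · have := DFunLike.congr_fun e (0 : Fin 2)
    simpa [Finsupp.single_apply] using this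
  · have := DFunLike.congr_fun e (1 : Fin 2)
    simpa [Finsupp.single_apply] using this

lemma coeff_mon (a b a' b' : ℕ) :
    coeff (Finsupp.single 0 a + Finsupp.single 1 b) ((X 0 : R2) ^ a' * X 1 ^ b')
      = if a' = a ∧ b' = b then 1 else 0 := by
  rw [X_pow_eq_monomial, X_pow_eq_monomial, monomial_mul, mul_one, coeff_monomial]
  by_cases hc : a' = a ∧ b' = b
  · obtain ⟨rfl, rfl⟩ := hc
    simp
  · rw [if_neg hc, if_neg]
    intro e
    exact hc ⟨(single_add_single_inj e).1, (single_add_single_inj e).2⟩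

lemma bas_li (n : ℕ) : LinearIndependent ℚ (bas n) := by
  rw [Fintype.linearIndependent_iff]
  intro g hg i₀
  set p : R2 := ∑ i : ↥(idx n), g i • (X 0 ^ (i : (_ : ℕ) × ℕ).1 * X 1 ^ (i : (_ : ℕ) × ℕ).2)
    with hp
  have hmk : mkI n p = 0 := by
    rw [hp, map_sum]
    rw [← hg]
    refine Finset.sum_congr rfl ?_
    intro i _
    rw [map_smul]
    rfl
  have hmem : p ∈ I n := by
    rwa [show mkI n p = Ideal.Quotient.mk (I n) p from rfl,
      Ideal.Quotient.eq_zero_iff_mem] at hmk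
  have hdeg : ∀ i : Fin 2, degreeOf i (φ p) ≤ n := by
    intro i
    rw [hp, map_sum]
    refine Finset.sum_induction _ (fun f => degreeOf i f ≤ n) ?_ ?_ ?_
    · intro f1 f2 hf1 hf2
      refine le_trans (degreeOf_add_le _ _ _) ?_
      omega
    · simp [degreeOf_zero]
    · intro j _
      rw [map_smul]
      refine le_trans (degreeOf_smul_le' _ _ _) ?_
      refine le_trans (degreeOf_phi_mon _ _ _) ?_
      exact mem_idx.1 j.2
  have hp0 : p = 0 := key n p hmem hdeg
  have hc : coeff (Finsupp.single 0 (i₀ : (_ : ℕ) × ℕ).1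
      + Finsupp.single 1 (i₀ : (_ : ℕ) × ℕ).2) p = g i₀ := by
    rw [hp, MvPolynomial.coeff_sum]
    rw [Fintype.sum_eq_single i₀ ?_]
    · rw [coeff_smul, coeff_mon, if_pos ⟨rfl, rfl⟩]
      simp
    · intro j hj
      rw [coeff_smul, coeff_mon, if_neg, smul_zero]
      rintro ⟨e1, e2⟩
      exact hj (Subtype.ext (Sigma.ext e1 (by simpa using e2)))
  rw [hp0] at hc
  simpa using hc.symm

end Stmt5Aux

/-- For `n ≥ 1`, the ring `ℚ[x,y]/(h_{n+1}, h_{n+2})` is a finite-dimensional `ℚ`-vector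
space of dimension `(n+1)(n+2)/2`. -/
theorem stmt5 (n : ℕ) (hn : 1 ≤ n) :
    FiniteDimensional ℚ
      (MvPolynomial (Fin 2) ℚ ⧸
        (Ideal.span {h (n + 1), h (n + 2)} : Ideal (MvPolynomial (Fin 2) ℚ))) ∧
    Module.finrank ℚ
      (MvPolynomial (Fin 2) ℚ ⧸
        (Ideal.span {h (n + 1), h (n + 2)} : Ideal (MvPolynomial (Fin 2) ℚ)))
      = (n + 1) * (n + 2) / 2 := by
  have B : Module.Basis ↥(Stmt5Aux.idx n) ℚ (Stmt5Aux.R2 ⧸ Stmt5Aux.I n) :=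
    Module.Basis.mk (Stmt5Aux.bas_li n) (Stmt5Aux.bas_span n)
  refine ⟨Module.Finite.of_basis B, ?_⟩
  rw [Module.finrank_eq_card_basis B, Fintype.card_coe]
  have := Stmt5Aux.card_idx n
  omega
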